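/- Let ρ₁, ρ₂ be quantum states on ℂ^d, let a ∈ [0,1], set D = a·ρ₁ − (1−a)·ρ₂, let Π₊ be the orthogonal projection onto the sum of the eigenspaces of D with strictly positive eigenvalue, and let K be the orthogonal projection onto the kernel of D. Then a two-outcome POVM (B₁, B₂) is Bayes-optimal for the prior (a, 1−a) if and only if Π₊ ≤ B₁ ≤ Π₊ + K (in the positive semidefinite order), i.e. B₁ = Π₊ + K' with 0 ≤ K' ≤ K. -/

import Mathlib

open Matrix ComplexOrder

/-- A quantum state on `ℂ^d`: a positive semidefinite matrix with unit trace. -/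
def IsQState {d : ℕ} (ρ : Matrix (Fin d) (Fin d) ℂ) : Prop :=
  ρ.PosSemidef ∧ ρ.trace = 1

/-- A two-outcome POVM: two positive semidefinite matrices summing to the identity. -/
def IsPOVM2 {d : ℕ} (P₁ P₂ : Matrix (Fin d) (Fin d) ℂ) : Prop :=
  P₁.PosSemidef ∧ P₂.PosSemidef ∧ P₁ + P₂ = 1

/-- `(B₁, B₂)` is Bayes-optimal for the prior `(a, 1-a)` and states `ρ₁, ρ₂`:
it is a POVM maximizing `a·Tr[ρ₁P₁] + (1-a)·Tr[ρ₂P₂]` over all two-outcome POVMs. -/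
def IsBayesOpt {d : ℕ} (ρ₁ ρ₂ : Matrix (Fin d) (Fin d) ℂ) (a : ℝ)
    (B₁ B₂ : Matrix (Fin d) (Fin d) ℂ) : Prop :=
  IsPOVM2 B₁ B₂ ∧ ∀ P₁ P₂ : Matrix (Fin d) (Fin d) ℂ, IsPOVM2 P₁ P₂ →
    a * ((ρ₁ * P₁).trace.re) + (1 - a) * ((ρ₂ * P₂).trace.re) ≤
      a * ((ρ₁ * B₁).trace.re) + (1 - a) * ((ρ₂ * B₂).trace.re)

section Aux

variable {d : ℕ}

open scoped MatrixOrder in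
private lemma psd_exists_conjTranspose_mul_self {A : Matrix (Fin d) (Fin d) ℂ} (hA : A.PosSemidef) :
    ∃ B : Matrix (Fin d) (Fin d) ℂ, A = Bᴴ * B := by
  obtain ⟨X, hX, -, h⟩ := CFC.exists_sqrt_of_isSelfAdjoint_of_quasispectrumRestricts hA.isHermitian
    (QuasispectrumRestricts.nnreal_of_nonneg hA.nonneg)
  exact ⟨X, by rw [← h, ← Matrix.star_eq_conjTranspose, hX.star_eq]⟩

private lemma psd_diag_real {A : Matrix (Fin d) (Fin d) ℂ} (hA : A.PosSemidef) (i : Fin d) :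
    A i i = ((A i i).re : ℂ) ∧ 0 ≤ (A i i).re := by
  obtain ⟨B, rfl⟩ := psd_exists_conjTranspose_mul_self hA
  have h : (Bᴴ * B) i i = ((∑ k, Complex.normSq (B k i) : ℝ) : ℂ) := by
    rw [Matrix.mul_apply]
    push_cast
    refine Finset.sum_congr rfl fun k _ => ?_
    rw [Matrix.conjTranspose_apply, Complex.star_def, ← Complex.normSq_eq_conj_mul_self]
  constructor
  · rw [h]; simp
  · rw [h, Complex.ofReal_re]
    exact Finset.sum_nonneg fun k _ => Complex.normSq_nonneg _

private lemma psd_row_col_zero {A : Matrix (Fin d) (Fin d) ℂ} (hA : A.PosSemidef) (i : Fin d)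
    (h : A i i = 0) (j : Fin d) : A i j = 0 ∧ A j i = 0 := by
  obtain ⟨B, rfl⟩ := psd_exists_conjTranspose_mul_self hA
  have h1 : (Bᴴ * B) i i = ((∑ k, Complex.normSq (B k i) : ℝ) : ℂ) := by
    rw [Matrix.mul_apply]
    push_cast
    refine Finset.sum_congr rfl fun k _ => ?_
    rw [Matrix.conjTranspose_apply, Complex.star_def, ← Complex.normSq_eq_conj_mul_self]
  have h2 : ∑ k, Complex.normSq (B k i) = 0 := by
    have := h1.symm.trans h
    exact_mod_cast this
  have hcol : ∀ k, B k i = 0 := by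
    intro k
    have := (Finset.sum_eq_zero_iff_of_nonneg
      (fun k _ => Complex.normSq_nonneg (B k i))).mp h2 k (Finset.mem_univ k)
    exact Complex.normSq_eq_zero.mp this
  constructor
  · rw [Matrix.mul_apply]
    refine Finset.sum_eq_zero fun k _ => ?_
    rw [Matrix.conjTranspose_apply, hcol k]
    simp
  · rw [Matrix.mul_apply]
    refine Finset.sum_eq_zero fun k _ => ?_
    rw [hcol k]
    simp

private lemma key_lemma (V : Matrix (Fin d) (Fin d) ℂ)
    (hV : star V * V = 1) (hV' : V * star V = 1)
    (lam : Fin d → ℝ)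
    (D F G : Matrix (Fin d) (Fin d) ℂ)
    (hD : D = V * diagonal (fun i => (lam i : ℂ)) * star V)
    (hF : F = V * diagonal (fun i => if 0 < lam i then (1 : ℂ) else 0) * star V)
    (hG : G = V * diagonal (fun i => if lam i = 0 then (1 : ℂ) else 0) * star V)
    (B : Matrix (Fin d) (Fin d) ℂ) :
    (B.PosSemidef ∧ (1 - B).PosSemidef ∧
      ∀ P : Matrix (Fin d) (Fin d) ℂ, P.PosSemidef → (1 - P).PosSemidef →
        (D * P).trace.re ≤ (D * B).trace.re) ↔
    ((B - F).PosSemidef ∧ (F + G - B).PosSemidef) := by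
  set f : Fin d → ℂ := fun i => if 0 < lam i then (1 : ℂ) else 0 with hf
  set g : Fin d → ℂ := fun i => if lam i = 0 then (1 : ℂ) else 0 with hg
  have hfval : ∀ i, f i = if 0 < lam i then (1 : ℂ) else 0 := fun i => rfl
  have hgval : ∀ i, g i = if lam i = 0 then (1 : ℂ) else 0 := fun i => rfl
  -- conjugation preserves PSD
  have conjV : ∀ M : Matrix (Fin d) (Fin d) ℂ, M.PosSemidef →
      (star V * M * V).PosSemidef := fun M hM => by
    rw [Matrix.star_eq_conjTranspose]
    exact hM.conjTranspose_mul_mul_same V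
  have conjV' : ∀ M : Matrix (Fin d) (Fin d) ℂ, M.PosSemidef →
      (V * M * star V).PosSemidef := fun M hM => by
    conv => enter [1, 1, 1]; rw [← Matrix.conjTranspose_conjTranspose V]
    rw [Matrix.star_eq_conjTranspose]
    exact hM.conjTranspose_mul_mul_same Vᴴ
  have unconj : ∀ M : Matrix (Fin d) (Fin d) ℂ, star V * (V * M * star V) * V = M := by
    intro M
    have e : star V * (V * M * star V) * V = (star V * V) * M * (star V * V) := by
      simp only [Matrix.mul_assoc]
    rw [e, hV, Matrix.one_mul, Matrix.mul_one]
  have recover : ∀ M : Matrix (Fin d) (Fin d) ℂ, V * (star V * M * V) * star V = M := by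
    intro M
    have e : V * (star V * M * V) * star V = (V * star V) * M * (V * star V) := by
      simp only [Matrix.mul_assoc]
    rw [e, hV', Matrix.one_mul, Matrix.mul_one]
  -- the trace formula
  have htr : ∀ P : Matrix (Fin d) (Fin d) ℂ,
      (D * P).trace = ∑ i, (lam i : ℂ) * ((star V * P * V) i i) := by
    intro P
    rw [hD]
    have e1 : V * diagonal (fun i => (lam i : ℂ)) * star V * P =
        V * (diagonal (fun i => (lam i : ℂ)) * (star V * P)) := by
      simp only [Matrix.mul_assoc]
    rw [e1, Matrix.trace_mul_comm]
    have e2 : diagonal (fun i => (lam i : ℂ)) * (star V * P) * V =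
        diagonal (fun i => (lam i : ℂ)) * (star V * P * V) := by
      simp only [Matrix.mul_assoc]
    rw [e2, Matrix.trace]
    refine Finset.sum_congr rfl fun i _ => ?_
    rw [Matrix.diag_apply, Matrix.diagonal_mul]
  have hobjre : ∀ P : Matrix (Fin d) (Fin d) ℂ,
      (D * P).trace.re = ∑ i, lam i * ((star V * P * V) i i).re := by
    intro P
    rw [htr P, Complex.re_sum]
    exact Finset.sum_congr rfl fun i _ => by rw [Complex.re_ofReal_mul]
  -- diagonal entry facts for POVM elements
  have sub_conj : ∀ P : Matrix (Fin d) (Fin d) ℂ,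
      star V * (1 - P) * V = 1 - star V * P * V := by
    intro P
    rw [Matrix.mul_sub, Matrix.mul_one, Matrix.sub_mul, hV]
  have diagfact : ∀ P : Matrix (Fin d) (Fin d) ℂ, P.PosSemidef → (1 - P).PosSemidef →
      ∀ i, (star V * P * V) i i = (((star V * P * V) i i).re : ℂ) ∧
        0 ≤ ((star V * P * V) i i).re ∧ ((star V * P * V) i i).re ≤ 1 := by
    intro P hP hP1 i
    have hC := conjV P hP
    have hC1 : (1 - star V * P * V).PosSemidef := by
      have := conjV _ hP1
      rwa [sub_conj P] at this
    obtain ⟨e1, e2⟩ := psd_diag_real hC i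
    obtain ⟨e3, e4⟩ := psd_diag_real hC1 i
    refine ⟨e1, e2, ?_⟩
    have e5 : (1 - star V * P * V) i i = 1 - (star V * P * V) i i := by
      simp [Matrix.sub_apply, Matrix.one_apply]
    rw [e5, Complex.sub_re, Complex.one_re] at e4
    linarith
  -- upper bound
  have hub : ∀ P : Matrix (Fin d) (Fin d) ℂ, P.PosSemidef → (1 - P).PosSemidef →
      (D * P).trace.re ≤ ∑ i, (if 0 < lam i then lam i else 0) := by
    intro P hP hP1
    rw [hobjre]
    refine Finset.sum_le_sum fun i _ => ?_
    obtain ⟨_, h0, h1⟩ := diagfact P hP hP1 i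
    by_cases hl : 0 < lam i
    · rw [if_pos hl]; nlinarith
    · rw [if_neg hl]; push_neg at hl; nlinarith
  have hFd : star V * F * V = diagonal f := by rw [hF]; exact unconj _
  have hGd : star V * G * V = diagonal g := by rw [hG]; exact unconj _
  have hFpsd : F.PosSemidef := by
    rw [hF]
    refine conjV' _ (Matrix.posSemidef_diagonal_iff.mpr fun i => ?_)
    rw [hfval i]
    by_cases hl : 0 < lam i
    · rw [if_pos hl]; exact zero_le_one
    · rw [if_neg hl]
  have hone : (1 : Matrix (Fin d) (Fin d) ℂ) = V * 1 * star V := by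
    rw [Matrix.mul_one, hV']
  have hF1psd : (1 - F).PosSemidef := by
    rw [hF, hone, ← Matrix.sub_mul, ← Matrix.mul_sub]
    have e : (1 : Matrix (Fin d) (Fin d) ℂ) - diagonal f = diagonal (fun i => 1 - f i) := by
      ext i j
      by_cases hij : i = j <;> simp [Matrix.diagonal_apply, hij, Matrix.one_apply]
    rw [e]
    refine conjV' _ (Matrix.posSemidef_diagonal_iff.mpr fun i => ?_)
    rw [hfval i]
    by_cases hl : 0 < lam i
    · rw [if_pos hl, sub_self]
    · rw [if_neg hl, sub_zero]; exact zero_le_one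
  have fre : ∀ i, (f i).re = if 0 < lam i then (1 : ℝ) else 0 := by
    intro i
    by_cases hl : 0 < lam i <;> simp [hfval i, hl]
  have gre : ∀ i, (g i).re = if lam i = 0 then (1 : ℝ) else 0 := by
    intro i
    by_cases hl : lam i = 0 <;> simp [hgval i, hl]
  have hobjF : (D * F).trace.re = ∑ i, (if 0 < lam i then lam i else 0) := by
    rw [hobjre, hFd]
    refine Finset.sum_congr rfl fun i _ => ?_
    rw [Matrix.diagonal_apply_eq, fre]
    by_cases hl : 0 < lam i <;> simp [hl]
  -- conjTranspose of diagonal g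
  have hstarg : star g = g := by
    funext i
    show star (g i) = g i
    by_cases hl : lam i = 0 <;> simp [hgval i, hl]
  have hGdH : (diagonal g)ᴴ = diagonal g := by
    rw [Matrix.diagonal_conjTranspose, hstarg]
  constructor
  · rintro ⟨hB, hB1, hopt⟩
    set C := star V * B * V with hCdef
    have hCps : C.PosSemidef := conjV B hB
    have hC1ps : (1 - C).PosSemidef := by
      have := conjV _ hB1
      rwa [sub_conj B] at this
    have hSeq : ∑ i, lam i * (C i i).re = ∑ i, (if 0 < lam i then lam i else 0) := by
      have h1 := hub B hB hB1
      have h2 := hopt F hFpsd hF1psd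
      rw [hobjF] at h2
      rw [hobjre B] at h1 h2
      exact le_antisymm h1 h2
    have hterm : ∀ i, lam i * (C i i).re = if 0 < lam i then lam i else 0 := by
      have hle : ∀ i ∈ Finset.univ, lam i * (C i i).re ≤ (if 0 < lam i then lam i else 0) := by
        intro i _
        obtain ⟨_, h0, h1⟩ := diagfact B hB hB1 i
        by_cases hl : 0 < lam i
        · rw [if_pos hl]; nlinarith
        · rw [if_neg hl]; push_neg at hl; nlinarith
      intro i
      exact (Finset.sum_eq_sum_iff_of_le hle).mp hSeq i (Finset.mem_univ i)
    have hCreal : ∀ i, C i i = ((C i i).re : ℂ) := fun i => (diagfact B hB hB1 i).1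
    have hCone : ∀ i, 0 < lam i → ∀ j,
        C i j = (1 : Matrix (Fin d) (Fin d) ℂ) i j ∧
        C j i = (1 : Matrix (Fin d) (Fin d) ℂ) j i := by
      intro i hl j
      have hre : (C i i).re = 1 := by
        have h' := hterm i
        rw [if_pos hl] at h'
        exact mul_left_cancel₀ (ne_of_gt hl) (h'.trans (mul_one (lam i)).symm)
      have hzero : (1 - C) i i = 0 := by
        rw [Matrix.sub_apply, Matrix.one_apply_eq, hCreal i, hre]
        simp
      obtain ⟨u, v⟩ := psd_row_col_zero hC1ps i hzero j
      rw [Matrix.sub_apply] at u v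
      exact ⟨(sub_eq_zero.mp u).symm, (sub_eq_zero.mp v).symm⟩
    have hCzero : ∀ i, lam i < 0 → ∀ j, C i j = 0 ∧ C j i = 0 := by
      intro i hl j
      have hre : (C i i).re = 0 := by
        have h' := hterm i
        rw [if_neg (not_lt.mpr hl.le)] at h'
        rcases mul_eq_zero.mp h' with h | h
        · exact absurd h (ne_of_lt hl)
        · exact h
      have hzero : C i i = 0 := by rw [hCreal i, hre]; simp
      exact psd_row_col_zero hCps i hzero j
    -- the two matrix identities
    have id1 : C - diagonal f = diagonal g * C * diagonal g := by
      ext i j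
      rw [Matrix.sub_apply, Matrix.mul_diagonal, Matrix.diagonal_mul, Matrix.diagonal_apply]
      rcases lt_trichotomy (lam i) 0 with hi | hi | hi
      · have hgi : g i = 0 := by rw [hgval i, if_neg (ne_of_lt hi)]
        have hfi : f i = 0 := by rw [hfval i, if_neg (not_lt.mpr hi.le)]
        simp [(hCzero i hi j).1, hgi, hfi]
      · have hgi : g i = 1 := by rw [hgval i, if_pos hi]
        have hfi : f i = 0 := by rw [hfval i, if_neg (by rw [hi]; exact lt_irrefl 0)]
        rcases lt_trichotomy (lam j) 0 with hj | hj | hj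
        · have hij : i ≠ j := by rintro rfl; rw [hi] at hj; exact lt_irrefl 0 hj
          have hgj : g j = 0 := by rw [hgval j, if_neg (ne_of_lt hj)]
          simp [(hCzero j hj i).2, hgj, hij, hfi]
        · have hgj : g j = 1 := by rw [hgval j, if_pos hj]
          simp [hgi, hgj, hfi]
        · have hij : i ≠ j := by rintro rfl; rw [hi] at hj; exact lt_irrefl 0 hj
          have hgj : g j = 0 := by rw [hgval j, if_neg (ne_of_gt hj)]
          have hCij : C i j = 0 := by
            rw [(hCone j hj i).2, Matrix.one_apply_ne hij]
          simp [hCij, hgj, hij]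
      · have hgi : g i = 0 := by rw [hgval i, if_neg (ne_of_gt hi)]
        have hfi : f i = 1 := by rw [hfval i, if_pos hi]
        have hCij : C i j = (1 : Matrix (Fin d) (Fin d) ℂ) i j := (hCone i hi j).1
        rw [hCij, hgi, Matrix.one_apply, hfi]
        by_cases hij : i = j <;> simp [hij]
    have id2 : diagonal f + diagonal g - C = diagonal g * (1 - C) * diagonal g := by
      ext i j
      rw [Matrix.sub_apply, Matrix.add_apply, Matrix.mul_diagonal, Matrix.diagonal_mul,
        Matrix.diagonal_apply, Matrix.diagonal_apply, Matrix.sub_apply, Matrix.one_apply]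
      rcases lt_trichotomy (lam i) 0 with hi | hi | hi
      · have hgi : g i = 0 := by rw [hgval i, if_neg (ne_of_lt hi)]
        have hfi : f i = 0 := by rw [hfval i, if_neg (not_lt.mpr hi.le)]
        simp [(hCzero i hi j).1, hgi, hfi]
      · have hgi : g i = 1 := by rw [hgval i, if_pos hi]
        have hfi : f i = 0 := by rw [hfval i, if_neg (by rw [hi]; exact lt_irrefl 0)]
        rcases lt_trichotomy (lam j) 0 with hj | hj | hj
        · have hij : i ≠ j := by rintro rfl; rw [hi] at hj; exact lt_irrefl 0 hj
          have hgj : g j = 0 := by rw [hgval j, if_neg (ne_of_lt hj)]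
          simp [(hCzero j hj i).2, hgj, hij, hfi]
        · have hgj : g j = 1 := by rw [hgval j, if_pos hj]
          simp [hgi, hgj, hfi]
        · have hij : i ≠ j := by rintro rfl; rw [hi] at hj; exact lt_irrefl 0 hj
          have hgj : g j = 0 := by rw [hgval j, if_neg (ne_of_gt hj)]
          have hCij : C i j = 0 := by
            rw [(hCone j hj i).2, Matrix.one_apply_ne hij]
          simp [hCij, hgj, hij]
      · have hgi : g i = 0 := by rw [hgval i, if_neg (ne_of_gt hi)]
        have hfi : f i = 1 := by rw [hfval i, if_pos hi]
        have hCij : C i j = (1 : Matrix (Fin d) (Fin d) ℂ) i j := (hCone i hi j).1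
        rw [hCij, hgi, Matrix.one_apply, hfi]
        by_cases hij : i = j <;> simp [hij]
    have hCFd : (C - diagonal f).PosSemidef := by
      rw [id1]
      have := hCps.conjTranspose_mul_mul_same (diagonal g)
      rwa [hGdH] at this
    have hFGC : (diagonal f + diagonal g - C).PosSemidef := by
      rw [id2]
      have := hC1ps.conjTranspose_mul_mul_same (diagonal g)
      rwa [hGdH] at this
    constructor
    · have e : B - F = V * (C - diagonal f) * star V := by
        rw [Matrix.mul_sub, Matrix.sub_mul, recover B, ← hF]
      rw [e]
      exact conjV' _ hCFd
    · have e : F + G - B = V * (diagonal f + diagonal g - C) * star V := by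
        rw [Matrix.mul_sub, Matrix.sub_mul, Matrix.mul_add, Matrix.add_mul, recover B, ← hF, ← hG]
      rw [e]
      exact conjV' _ hFGC
  · rintro ⟨h1, h2⟩
    set C := star V * B * V with hCdef
    have hC1 : (C - diagonal f).PosSemidef := by
      have := conjV _ h1
      rwa [Matrix.mul_sub, Matrix.sub_mul, hFd] at this
    have hC2 : (diagonal f + diagonal g - C).PosSemidef := by
      have := conjV _ h2
      rwa [Matrix.mul_sub, Matrix.sub_mul, Matrix.mul_add, Matrix.add_mul, hFd, hGd] at this
    have hBps : B.PosSemidef := by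
      have := hFpsd.add h1
      rwa [show F + (B - F) = B from by abel] at this
    have hFG1 : (1 - F - G).PosSemidef := by
      rw [hF, hG, hone]
      have e : V * 1 * star V - V * diagonal f * star V - V * diagonal g * star V
          = V * (1 - diagonal f - diagonal g) * star V := by
        rw [Matrix.mul_sub, Matrix.mul_sub, Matrix.sub_mul, Matrix.sub_mul]
      rw [e]
      have e2 : (1 : Matrix (Fin d) (Fin d) ℂ) - diagonal f - diagonal g
          = diagonal (fun i => 1 - f i - g i) := by
        ext i j
        by_cases hij : i = j <;> simp [Matrix.diagonal_apply, hij, Matrix.one_apply]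
      rw [e2]
      refine conjV' _ (Matrix.posSemidef_diagonal_iff.mpr fun i => ?_)
      rw [hfval i, hgval i]
      rcases lt_trichotomy (lam i) 0 with hi | hi | hi
      · rw [if_neg (not_lt.mpr hi.le), if_neg (ne_of_lt hi), sub_zero, sub_zero]
        exact zero_le_one
      · rw [if_neg (by rw [hi]; exact lt_irrefl 0), if_pos hi, sub_zero, sub_self]
      · rw [if_pos hi, if_neg (ne_of_gt hi), sub_zero, sub_self]
    have hB1ps : (1 - B).PosSemidef := by
      have := hFG1.add h2
      rwa [show (1 - F - G) + (F + G - B) = 1 - B from by abel] at this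
    refine ⟨hBps, hB1ps, ?_⟩
    have hCre : ∀ i, lam i * (C i i).re = if 0 < lam i then lam i else 0 := by
      intro i
      have d1 := (psd_diag_real hC1 i).2
      have d2 := (psd_diag_real hC2 i).2
      rw [Matrix.sub_apply, Complex.sub_re, Matrix.diagonal_apply_eq, fre] at d1
      rw [Matrix.sub_apply, Matrix.add_apply, Complex.sub_re, Complex.add_re,
        Matrix.diagonal_apply_eq, Matrix.diagonal_apply_eq, fre, gre] at d2
      rcases lt_trichotomy (lam i) 0 with hi | hi | hi
      · rw [if_neg (not_lt.mpr hi.le)] at d1 ⊢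
        rw [if_neg (not_lt.mpr hi.le), if_neg (ne_of_lt hi)] at d2
        have : (C i i).re = 0 := le_antisymm (by linarith) (by linarith)
        rw [this, mul_zero]
      · simp [hi]
      · rw [if_pos hi] at d1 ⊢
        rw [if_pos hi, if_neg (ne_of_gt hi)] at d2
        have : (C i i).re = 1 := le_antisymm (by linarith) (by linarith)
        rw [this, mul_one]
    intro P hP hP1
    have hbound := hub P hP hP1
    have hBval : (D * B).trace.re = ∑ i, (if 0 < lam i then lam i else 0) := by
      rw [hobjre]
      exact Finset.sum_congr rfl fun i _ => hCre i
    rw [hBval]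
    exact hbound

end Aux

theorem bayes_opt_iff_between_positive_part_and_kernel
    {d : ℕ} (ρ₁ ρ₂ : Matrix (Fin d) (Fin d) ℂ)
    (hρ₁ : IsQState ρ₁) (hρ₂ : IsQState ρ₂)
    (a : ℝ) (ha : a ∈ Set.Icc (0 : ℝ) 1)
    (D : Matrix (Fin d) (Fin d) ℂ)
    (hD : D = (a : ℂ) • ρ₁ - ((1 - a : ℝ) : ℂ) • ρ₂)
    (hDherm : D.IsHermitian)
    (Pplus K : Matrix (Fin d) (Fin d) ℂ)
    (hPplus : Pplus = hDherm.cfc (fun x => if 0 < x then 1 else 0))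
    (hK : K = hDherm.cfc (fun x => if x = 0 then 1 else 0))
    (B₁ B₂ : Matrix (Fin d) (Fin d) ℂ) :
    IsBayesOpt ρ₁ ρ₂ a B₁ B₂ ↔
      (B₂ = 1 - B₁ ∧ (B₁ - Pplus).PosSemidef ∧ (Pplus + K - B₁).PosSemidef) := by
  set V : Matrix (Fin d) (Fin d) ℂ := (hDherm.eigenvectorUnitary : Matrix (Fin d) (Fin d) ℂ)
    with hVdef
  set lam : Fin d → ℝ := hDherm.eigenvalues with hlam
  have hV : star V * V = 1 := Matrix.mem_unitaryGroup_iff'.mp hDherm.eigenvectorUnitary.2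
  have hV' : V * star V = 1 := Matrix.mem_unitaryGroup_iff.mp hDherm.eigenvectorUnitary.2
  have hDspec : D = V * diagonal (fun i => (lam i : ℂ)) * star V := by
    conv_lhs => rw [hDherm.spectral_theorem]
    rfl
  have harg1 : (RCLike.ofReal ∘ (fun x => if 0 < x then (1 : ℝ) else 0) ∘ hDherm.eigenvalues)
      = fun i => if 0 < lam i then (1 : ℂ) else 0 := by
    funext i
    show (RCLike.ofReal (if 0 < lam i then (1 : ℝ) else 0) : ℂ) = _
    by_cases h : 0 < lam i <;> simp [h]
  have harg2 : (RCLike.ofReal ∘ (fun x => if x = 0 then (1 : ℝ) else 0) ∘ hDherm.eigenvalues)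
      = fun i => if lam i = 0 then (1 : ℂ) else 0 := by
    funext i
    show (RCLike.ofReal (if lam i = 0 then (1 : ℝ) else 0) : ℂ) = _
    by_cases h : lam i = 0 <;> simp [h]
  have hPspec : Pplus = V * diagonal (fun i => if 0 < lam i then (1 : ℂ) else 0) * star V := by
    rw [hPplus]
    simp only [Matrix.IsHermitian.cfc]
    rw [harg1]
    exact Unitary.conjStarAlgAut_apply _ _
  have hKspec : K = V * diagonal (fun i => if lam i = 0 then (1 : ℂ) else 0) * star V := by
    rw [hK]
    simp only [Matrix.IsHermitian.cfc]
    rw [harg2]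
    exact Unitary.conjStarAlgAut_apply _ _
  have hkey := key_lemma V hV hV' lam D Pplus K hDspec hPspec hKspec B₁
  -- objective reduction
  have hobj2 : ∀ P₁ P₂ : Matrix (Fin d) (Fin d) ℂ, IsPOVM2 P₁ P₂ →
      a * ((ρ₁ * P₁).trace.re) + (1 - a) * ((ρ₂ * P₂).trace.re)
        = (D * P₁).trace.re + (1 - a) := by
    rintro P₁ P₂ ⟨h1, h2, h12⟩
    have hP2 : P₂ = 1 - P₁ := by rw [← h12]; abel
    have e1 : (D * P₁).trace = (a : ℂ) * (ρ₁ * P₁).trace - ((1 - a : ℝ) : ℂ) * (ρ₂ * P₁).trace := by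
      rw [hD, Matrix.sub_mul, Matrix.smul_mul, Matrix.smul_mul, Matrix.trace_sub,
        Matrix.trace_smul, Matrix.trace_smul, smul_eq_mul, smul_eq_mul]
    have e1' : (D * P₁).trace.re = a * (ρ₁ * P₁).trace.re - (1 - a) * (ρ₂ * P₁).trace.re := by
      rw [e1, Complex.sub_re, Complex.re_ofReal_mul, Complex.re_ofReal_mul]
    have e2 : (ρ₂ * P₂).trace.re = 1 - (ρ₂ * P₁).trace.re := by
      rw [hP2, Matrix.mul_sub, Matrix.mul_one, Matrix.trace_sub, Complex.sub_re, hρ₂.2,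
        Complex.one_re]
    rw [e2, e1']
    ring
  constructor
  · rintro ⟨⟨hB1, hB2, hsum⟩, hmax⟩
    have hB₂ : B₂ = 1 - B₁ := by rw [← hsum]; abel
    refine ⟨hB₂, hkey.mp ⟨hB1, hB₂ ▸ hB2, ?_⟩⟩
    intro P hP hP1
    have hPOVM : IsPOVM2 P (1 - P) := ⟨hP, hP1, by abel⟩
    have h := hmax P (1 - P) hPOVM
    rw [hobj2 P (1 - P) hPOVM, hobj2 B₁ B₂ ⟨hB1, hB2, hsum⟩] at h
    linarith
  · rintro ⟨hB₂, hsand⟩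
    obtain ⟨hBps, hB1ps, hopt⟩ := hkey.mpr hsand
    have hPOVMB : IsPOVM2 B₁ B₂ := ⟨hBps, hB₂ ▸ hB1ps, by rw [hB₂]; abel⟩
    refine ⟨hPOVMB, ?_⟩
    intro P₁ P₂ hP
    have hP2 : P₂ = 1 - P₁ := by rw [← hP.2.2]; abel
    rw [hobj2 P₁ P₂ hP, hobj2 B₁ B₂ hPOVMB]
    have := hopt P₁ hP.1 (hP2 ▸ hP.2.1)
    linarith
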